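/- For every β ∈ (0, 1/2) there exists a constant C such that for every nonzero integer k, ∑_{ℓ ∈ ℤ} (ℓ² + (k−ℓ)²)^β / (k² − kℓ + ℓ²) ≤ C·|k|^{2β−1}. -/

import Mathlib

open Real Finset

private lemma bern_step {t : ℝ} (ht0 : 0 < t) (ht1 : t < 1) {x : ℝ} (hx : 1 ≤ x) :
    t * (x + 1) ^ (-(1 + t)) ≤ x ^ (-t) - (x + 1) ^ (-t) := by
  have hx0 : (0:ℝ) < x := lt_of_lt_of_le one_pos hx
  have hx1 : (0:ℝ) < x + 1 := by linarith
  set a : ℝ := 1 / (x + 1) with ha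
  have ha0 : 0 < a := by positivity
  have ha2 : a ≤ 1 / 2 := by
    rw [ha, div_le_div_iff₀ hx1 two_pos]; linarith
  have hta : t * a < 1 := by nlinarith
  have hB : (1 - a) ^ t ≤ 1 - t * a := by
    have h := rpow_one_add_le_one_add_mul_self (s := -a) (by linarith) ht0.le ht1.le
    have e1 : 1 + -a = 1 - a := by ring
    have e2 : 1 + t * -a = 1 - t * a := by ring
    rwa [e1, e2] at h
  have h1a : (0:ℝ) < 1 - a := by linarith
  have h1ta : (0:ℝ) < 1 - t * a := by linarith
  have hu : 0 < (1 - a) ^ t := rpow_pos_of_pos h1a t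
  have h2 : 1 + t * a ≤ ((1 - a) ^ t)⁻¹ := by
    rw [← mul_le_mul_iff_of_pos_right hu, inv_mul_cancel₀ (ne_of_gt hu)]
    nlinarith [mul_le_mul_of_nonneg_left hB (show (0:ℝ) ≤ 1 + t * a by positivity),
      sq_nonneg (t * a)]
  have hxa : x = (1 - a) * (x + 1) := by
    rw [ha, sub_mul, one_div, inv_mul_cancel₀ hx1.ne', one_mul]; ring
  have hxrw : x ^ (-t) = (1 - a) ^ (-t) * (x + 1) ^ (-t) := by
    conv_lhs => rw [hxa]
    rw [mul_rpow h1a.le hx1.le]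
  have hinv : (1 - a) ^ (-t) = ((1 - a) ^ t)⁻¹ := by
    rw [rpow_neg h1a.le]
  have hpos : 0 < (x + 1) ^ (-t) := rpow_pos_of_pos hx1 _
  have key : (1 + t * a) * ((x + 1) ^ (-t)) ≤ x ^ (-t) := by
    rw [hxrw, hinv]
    exact mul_le_mul_of_nonneg_right h2 hpos.le
  have hsplit : (x + 1) ^ (-(1 + t)) = a * (x + 1) ^ (-t) := by
    have : -(1 + t) = (-1) + (-t) := by ring
    rw [this, rpow_add hx1, rpow_neg_one, ha, one_div]
  rw [hsplit]
  nlinarith [key]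

private lemma tail_bound {t : ℝ} (ht0 : 0 < t) (ht1 : t < 1) {K : ℕ} (hK : 1 ≤ K)
    {f : ℕ → ℝ} (hf0 : ∀ n, 0 ≤ f n)
    (hfle : ∀ n, f n ≤ ((K : ℝ) + 1 + n) ^ (-(1 + t))) :
    (∑' n : ℕ, f n) ≤ (K : ℝ) ^ (-t) / t := by
  set g : ℕ → ℝ := fun i => ((K + i : ℕ) : ℝ) ^ (-t) / t with hg
  have hg0 : ∀ i, 0 ≤ g i := fun i => div_nonneg (rpow_nonneg (by positivity) _) ht0.le
  have step : ∀ n : ℕ, f n ≤ g n - g (n + 1) := by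
    intro n
    have h1 : (1:ℝ) ≤ ((K + n : ℕ) : ℝ) := by
      have : 1 ≤ K + n := le_trans hK (Nat.le_add_right K n)
      exact_mod_cast this
    have hb := bern_step ht0 ht1 (x := ((K + n : ℕ) : ℝ)) h1
    have hc1 : ((K + n : ℕ) : ℝ) + 1 = ((K + (n + 1) : ℕ) : ℝ) := by push_cast; ring
    have hc2 : (K : ℝ) + 1 + n = ((K + n : ℕ) : ℝ) + 1 := by push_cast; ring
    have := hfle n
    rw [hc2] at this
    have hdiv : ((K + n : ℕ) : ℝ) + 1 = ((K + n + 1 : ℕ) : ℝ) := by push_cast; ring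
    calc f n ≤ (((K + n : ℕ) : ℝ) + 1) ^ (-(1 + t)) := this
      _ ≤ (((K + n : ℕ) : ℝ) ^ (-t) - (((K + n : ℕ) : ℝ) + 1) ^ (-t)) / t := by
          rw [le_div_iff₀ ht0]; linarith [hb]
      _ = g n - g (n + 1) := by
          rw [hg]; simp only; rw [hc1]; push_cast; ring
  apply Real.tsum_le_of_sum_range_le hf0
  intro M
  calc ∑ i ∈ range M, f i ≤ ∑ i ∈ range M, (g i - g (i + 1)) := sum_le_sum fun i _ => step i
    _ = g 0 - g M := Finset.sum_range_sub' g M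
    _ ≤ g 0 := by linarith [hg0 M]
    _ = (K : ℝ) ^ (-t) / t := by rw [hg]; simp

private lemma pt_bound {β : ℝ} (hβ0 : 0 < β) (hβ : β < 1/2) {c x : ℝ} (hc : c ≠ 0) :
    (x ^ 2 + (c - x) ^ 2) ^ β / (c ^ 2 - c * x + x ^ 2) ≤ 2 * (c ^ 2 + x ^ 2) ^ (β - 1) := by
  have hc2 : 0 < c ^ 2 := by positivity
  have hQ : 0 < c ^ 2 - c * x + x ^ 2 := by nlinarith [sq_nonneg (2 * x - c)]
  set Q := c ^ 2 - c * x + x ^ 2 with hQdef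
  have hN : x ^ 2 + (c - x) ^ 2 ≤ 2 * Q := by rw [hQdef]; nlinarith
  have hN0 : 0 ≤ x ^ 2 + (c - x) ^ 2 := by positivity
  have h1 : (x ^ 2 + (c - x) ^ 2) ^ β ≤ (2 * Q) ^ β := rpow_le_rpow hN0 hN hβ0.le
  have h2 : (x ^ 2 + (c - x) ^ 2) ^ β / Q ≤ (2 * Q) ^ β / Q := by gcongr
  have h3 : (2 * Q) ^ β / Q = 2 ^ β * Q ^ (β - 1) := by
    rw [mul_rpow (by norm_num) hQ.le, rpow_sub hQ, rpow_one, mul_div_assoc]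
  have h4 : Q ^ (β - 1) ≤ ((c ^ 2 + x ^ 2) / 2) ^ (β - 1) := by
    apply rpow_le_rpow_of_nonpos (by positivity) (by rw [hQdef]; nlinarith [sq_nonneg (c - x)])
      (by linarith)
  have h5 : ((c ^ 2 + x ^ 2) / 2) ^ (β - 1) = (c ^ 2 + x ^ 2) ^ (β - 1) * 2 ^ (1 - β) := by
    rw [div_rpow (by positivity) (by norm_num), div_eq_mul_inv, ← rpow_neg (by norm_num)]
    ring_nf
  have h6 : (2:ℝ) ^ β * 2 ^ (1 - β) = 2 := by
    rw [← rpow_add (by norm_num)]; norm_num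
  calc (x ^ 2 + (c - x) ^ 2) ^ β / Q ≤ (2 * Q) ^ β / Q := h2
    _ = 2 ^ β * Q ^ (β - 1) := h3
    _ ≤ 2 ^ β * ((c ^ 2 + x ^ 2) ^ (β - 1) * 2 ^ (1 - β)) := by
        have := h4.trans_eq h5
        exact mul_le_mul_of_nonneg_left this (rpow_nonneg (by norm_num) _)
    _ = 2 * (c ^ 2 + x ^ 2) ^ (β - 1) := by rw [← mul_assoc, mul_comm ((2:ℝ) ^ β), mul_assoc,
        mul_comm ((2:ℝ) ^ β), mul_comm ((2:ℝ) ^ (1 - β)), h6, mul_comm]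

theorem stmt_10 (β : ℝ) (hβ0 : 0 < β) (hβ : β < 1 / 2) :
    ∃ C : ℝ, ∀ k : ℤ, k ≠ 0 →
      (∑' ℓ : ℤ,
          (((ℓ : ℝ) ^ 2 + ((k : ℝ) - (ℓ : ℝ)) ^ 2) ^ β)
            / ((k : ℝ) ^ 2 - (k : ℝ) * (ℓ : ℝ) + (ℓ : ℝ) ^ 2))
        ≤ C * |(k : ℝ)| ^ (2 * β - 1) := by
  set t : ℝ := 1 - 2 * β with htdef
  have ht0 : 0 < t := by rw [htdef]; linarith
  have ht1 : t < 1 := by rw [htdef]; linarith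
  refine ⟨8 + 4 / t, fun k hk => ?_⟩
  set c : ℝ := (k : ℝ) with hcdef
  have hc : c ≠ 0 := by
    simp only [hcdef, ne_eq, Int.cast_eq_zero]; exact hk
  have hc2 : 0 < c ^ 2 := by positivity
  set K : ℕ := k.natAbs with hKdef
  have hK : 1 ≤ K := Int.natAbs_pos.mpr hk
  have hKr : |c| = (K : ℝ) := by
    rw [hcdef, hKdef, Nat.cast_natAbs, Int.cast_abs]
  have hKr1 : (1:ℝ) ≤ (K : ℝ) := by exact_mod_cast hK
  have hKr0 : (0:ℝ) < (K : ℝ) := by linarith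
  have hcK : c ^ 2 = ((K:ℝ)) ^ 2 := by rw [← hKr, sq_abs]
  set h : ℕ → ℝ := fun n => (c ^ 2 + (n : ℝ) ^ 2) ^ (β - 1) with hhdef
  have hh0 : ∀ n, 0 ≤ h n := fun n => rpow_nonneg (by positivity) _
  have hβ1 : β - 1 ≤ 0 := by linarith
  have hsq : ∀ y : ℝ, 0 ≤ y → (y ^ 2) ^ (β - 1) = y ^ (-(1 + t)) := by
    intro y hy
    rw [← rpow_natCast y 2, ← rpow_mul hy]
    norm_num
    rw [htdef]; ring_nf
  have hhb : ∀ y : ℕ, 1 ≤ y → h y ≤ ((y:ℝ)) ^ (-(1 + t)) := by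
    intro y hy
    have hy1 : (1:ℝ) ≤ (y:ℝ) := by exact_mod_cast hy
    have : h y ≤ ((y:ℝ) ^ 2) ^ (β - 1) := by
      apply rpow_le_rpow_of_nonpos (by positivity) (by nlinarith) hβ1
    rwa [hsq _ (by linarith)] at this
  -- summability of h
  have hS1 : Summable (fun n : ℕ => ((n:ℝ) + 1) ^ (-(1 + t))) := by
    have := (summable_nat_add_iff 1).mpr
      (Real.summable_nat_rpow.mpr (show -(1 + t) < -1 by linarith))
    apply this.congr
    intro n; push_cast; ring_nf
  have hSh : Summable h := by
    apply (summable_nat_add_iff 1).mp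
    apply Summable.of_nonneg_of_le (fun n => hh0 _) _ hS1
    intro n
    have := hhb (n + 1) (Nat.le_add_left 1 n)
    convert this using 2 <;> push_cast <;> ring
  set h' : ℤ → ℝ := fun ℓ => (c ^ 2 + (ℓ : ℝ) ^ 2) ^ (β - 1) with hh'def
  have hnat : ∀ n : ℕ, h' (n : ℤ) = h n := by intro n; simp [hh'def, hhdef]
  have hneg : ∀ n : ℕ, h' (-((n:ℤ) + 1)) = h (n + 1) := by
    intro n
    simp only [hh'def, hhdef]
    push_cast
    ring_nf
  have hSh' : Summable h' := by
    apply Summable.of_nat_of_neg_add_one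
    · exact hSh.congr fun n => (hnat n).symm
    · exact ((summable_nat_add_iff 1).mpr hSh).congr fun n => (hneg n).symm
  -- the series itself
  set f : ℤ → ℝ := fun ℓ =>
    (((ℓ : ℝ) ^ 2 + (c - (ℓ : ℝ)) ^ 2) ^ β) / (c ^ 2 - c * (ℓ : ℝ) + (ℓ : ℝ) ^ 2) with hfdef
  have hf0 : ∀ ℓ, 0 ≤ f ℓ := by
    intro ℓ
    apply div_nonneg (rpow_nonneg (by positivity) _)
    nlinarith [sq_nonneg (2 * (ℓ:ℝ) - c), sq_nonneg c]
  have hfle : ∀ ℓ, f ℓ ≤ 2 * h' ℓ := fun ℓ => pt_bound hβ0 hβ hc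
  have hSf : Summable f :=
    Summable.of_nonneg_of_le hf0 hfle (hSh'.mul_left 2)
  have hB0 : 0 ≤ ∑' n, h n := tsum_nonneg hh0
  -- bound B = ∑' h n
  have hBsplit := hSh.sum_add_tsum_nat_add (K + 1)
  have hhead : ∑ i ∈ range (K + 1), h i ≤ 2 * (K:ℝ) ^ (-t) := by
    have hone : ∀ i ∈ range (K + 1), h i ≤ ((K:ℝ)) ^ (-(1 + t)) := by
      intro i _
      have : h i ≤ (c ^ 2) ^ (β - 1) :=
        rpow_le_rpow_of_nonpos hc2 (le_add_of_nonneg_right (by positivity)) hβ1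
      rwa [hcK, hsq _ hKr0.le] at this
    calc ∑ i ∈ range (K + 1), h i ≤ ∑ _i ∈ range (K + 1), ((K:ℝ)) ^ (-(1 + t)) :=
          sum_le_sum hone
      _ = ((K:ℝ) + 1) * ((K:ℝ)) ^ (-(1 + t)) := by
          rw [Finset.sum_const, card_range, nsmul_eq_mul]; push_cast; ring
      _ ≤ (2 * (K:ℝ)) * ((K:ℝ)) ^ (-(1 + t)) := by
          apply mul_le_mul_of_nonneg_right (by linarith) (rpow_nonneg hKr0.le _)
      _ = 2 * (K:ℝ) ^ (-t) := by
          rw [mul_assoc, mul_comm ((K:ℝ)) (((K:ℝ)) ^ (-(1 + t))), ← rpow_add_one (ne_of_gt hKr0)]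
          norm_num
  have htail : (∑' n : ℕ, h (n + (K + 1))) ≤ (K:ℝ) ^ (-t) / t := by
    apply tail_bound ht0 ht1 hK (fun n => hh0 _)
    intro n
    have h1 : 1 ≤ n + (K + 1) := by omega
    have := hhb (n + (K + 1)) h1
    convert this using 2
    push_cast; ring
  have hB : (∑' n, h n) ≤ (2 + 1 / t) * (K:ℝ) ^ (-t) := by
    rw [← hBsplit]
    have : (2 + 1 / t) * (K:ℝ) ^ (-t) = 2 * (K:ℝ) ^ (-t) + (K:ℝ) ^ (-t) / t := by
      field_simp
    rw [this]
    exact add_le_add hhead htail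
  have hB' : (∑' n : ℕ, h (n + 1)) ≤ ∑' n, h n := by
    have := hSh.sum_add_tsum_nat_add 1
    have h0 : 0 ≤ ∑ i ∈ range 1, h i := sum_nonneg fun i _ => hh0 i
    linarith [this]
  have hsplit' : ∑' ℓ : ℤ, h' ℓ = (∑' n : ℕ, h n) + ∑' n : ℕ, h (n + 1) := by
    rw [tsum_of_nat_of_neg_add_one (hSh.congr fun n => (hnat n).symm)
      (((summable_nat_add_iff 1).mpr hSh).congr fun n => (hneg n).symm)]
    rw [tsum_congr hnat, tsum_congr hneg]
  have main : (∑' ℓ : ℤ, f ℓ) ≤ (8 + 4 / t) * (K:ℝ) ^ (-t) := by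
    calc (∑' ℓ : ℤ, f ℓ) ≤ ∑' ℓ : ℤ, 2 * h' ℓ :=
          Summable.tsum_le_tsum hfle hSf (hSh'.mul_left 2)
      _ = 2 * ∑' ℓ : ℤ, h' ℓ := tsum_mul_left
      _ = 2 * ((∑' n : ℕ, h n) + ∑' n : ℕ, h (n + 1)) := by rw [hsplit']
      _ ≤ 2 * ((∑' n : ℕ, h n) + ∑' n : ℕ, h n) := by
          have := add_le_add_left hB' (∑' n : ℕ, h n)
          linarith
      _ = 4 * ∑' n, h n := by ring
      _ ≤ 4 * ((2 + 1 / t) * (K:ℝ) ^ (-t)) := by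
          apply mul_le_mul_of_nonneg_left hB (by norm_num)
      _ = (8 + 4 / t) * (K:ℝ) ^ (-t) := by ring
  have hfin : |c| ^ (2 * β - 1) = (K:ℝ) ^ (-t) := by
    rw [hKr, htdef]; norm_num
  rw [hfin]
  exact main
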